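/- For each fixed x2 ∈ [0,m2], the function x1 ↦ r1(x1,x2) is concave on the set of x1 ∈ [0,m1] with m − (1−p)(x1+x2) > 0; symmetrically, for each fixed x1 ∈ [0,m1], the function x2 ↦ r2(x1,x2) is concave on the set of x2 ∈ [0,m2] with m − (1−p)(x1+x2) > 0. -/

import Mathlib

/-- Average reward of pool 1 in the two-player miner's dilemma with betrayal,
where the total mining power is `m1 + m2 + t`. -/
noncomputable def r1 (m1 m2 t p x1 x2 : ℝ) : ℝ :=
  (m1*m2 + m1*x1 + p*m2*x2 - (1-p)*x1^2 - (1-p)*x1*x2) /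
    (((m1+m2+t) - (1-p)*(x1+x2)) * (m1*m2 + m1*x1 + m2*x2))

/-- Average reward of pool 2. -/
noncomputable def r2 (m1 m2 t p x1 x2 : ℝ) : ℝ :=
  (m1*m2 + m2*x2 + p*m1*x1 - (1-p)*x2^2 - (1-p)*x1*x2) /
    (((m1+m2+t) - (1-p)*(x1+x2)) * (m1*m2 + m1*x1 + m2*x2))

/-- `(x1, x2)` is a pure Nash equilibrium of the two-player miner's dilemma game. -/
noncomputable def IsNash (m1 m2 t p x1 x2 : ℝ) : Prop :=
  x1 ∈ Set.Icc 0 m1 ∧ x2 ∈ Set.Icc 0 m2 ∧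
  (∀ x ∈ Set.Icc (0:ℝ) m1, r1 m1 m2 t p x x2 ≤ r1 m1 m2 t p x1 x2) ∧
  (∀ x ∈ Set.Icc (0:ℝ) m2, r2 m1 m2 t p x1 x ≤ r2 m1 m2 t p x1 x2)

/-- Concavity is invariant under pointwise equality on the set. -/
lemma myConcave_congr {s : Set ℝ} {f g : ℝ → ℝ} (hf : ConcaveOn ℝ s f)
    (h : ∀ x ∈ s, f x = g x) : ConcaveOn ℝ s g := by
  refine ⟨hf.1, fun x hx y hy a b ha hb hab => ?_⟩
  have := hf.2 hx hy ha hb hab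
  rwa [h x hx, h y hy, h _ (hf.1 hx hy ha hb hab)] at this

lemma myConvexOn_inv : ConvexOn ℝ (Set.Ioi (0:ℝ)) (fun x : ℝ => x⁻¹) := by
  have h := (strictConvexOn_zpow (m := -1) (by norm_num) (by norm_num)).convexOn
  refine ⟨h.1, fun x hx y hy a b ha hb hab => ?_⟩
  have := h.2 hx hy ha hb hab
  simpa [zpow_neg, zpow_one] using this

lemma myConvexOn_inv_affine (a b : ℝ) :
    ConvexOn ℝ {x : ℝ | 0 < a + b*x} (fun x : ℝ => (a + b*x)⁻¹) := by
  have h := myConvexOn_inv.comp_affineMap (AffineMap.lineMap (a : ℝ) (a+b) : ℝ →ᵃ[ℝ] ℝ)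
  have hs : ((AffineMap.lineMap (a : ℝ) (a+b) : ℝ →ᵃ[ℝ] ℝ)) ⁻¹' (Set.Ioi 0)
      = {x : ℝ | 0 < a + b*x} := by
    ext x
    simp [AffineMap.lineMap_apply, smul_eq_mul]
    constructor <;> intro h <;> linarith [h]
  have hf : ((fun x : ℝ => x⁻¹) ∘ (AffineMap.lineMap (a:ℝ) (a+b) : ℝ →ᵃ[ℝ] ℝ))
      = fun x : ℝ => (a + b*x)⁻¹ := by
    funext x
    simp [AffineMap.lineMap_apply, smul_eq_mul]
    ring_nf
  rwa [hs, hf] at h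

lemma myConcave_scaled_inv {s : Set ℝ} (hs : Convex ℝ s) (a b c : ℝ) (hc : c ≤ 0)
    (hsub : ∀ x ∈ s, 0 < a + b*x) :
    ConcaveOn ℝ s (fun x => c * (a + b*x)⁻¹) := by
  have h1 : ConvexOn ℝ s (fun x : ℝ => (a+b*x)⁻¹) :=
    (myConvexOn_inv_affine a b).subset hsub hs
  have h2 : ConvexOn ℝ s (fun x => (-c) • (a+b*x)⁻¹) := h1.smul (by linarith)
  have h3 := h2.neg
  refine myConcave_congr h3 fun x _ => ?_
  simp only [Pi.neg_apply, smul_eq_mul]; ring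

lemma frac_decomp (N d1 d2 m1 E NB NC : ℝ) (h1 : d1 ≠ 0) (h2 : d2 ≠ 0)
    (h3 : m1 ≠ 0) (h4 : E ≠ 0)
    (h : m1*E*N = E*(d1*d2) + m1*NB*d2 + NC*d1) :
    1/m1 + NB/E * d1⁻¹ + NC/(m1*E) * d2⁻¹ = N/(d1*d2) := by
  field_simp
  linear_combination -h

set_option maxHeartbeats 2000000 in
lemma key (m1 m2 t p : ℝ) (hm1 : 0 < m1) (hm2 : 0 < m2) (ht : 0 ≤ t)
    (hp0 : 0 ≤ p) (hp1 : p < 1) (x2 : ℝ) (hx2 : x2 ∈ Set.Icc (0:ℝ) m2) :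
    ConcaveOn ℝ {x1 : ℝ | x1 ∈ Set.Icc (0:ℝ) m1 ∧ 0 < (m1+m2+t) - (1-p)*(x1+x2)}
      (fun x1 => r1 m1 m2 t p x1 x2) := by
  obtain ⟨hx20, hx2m⟩ := hx2
  have hq0 : (0:ℝ) < 1 - p := by linarith
  have hSeq : {x1 : ℝ | x1 ∈ Set.Icc (0:ℝ) m1 ∧ 0 < (m1+m2+t) - (1-p)*(x1+x2)}
      = Set.Icc (0:ℝ) m1 ∩ Set.Iio (((m1+m2+t) - (1-p)*x2)/(1-p)) := by
    ext x
    simp only [Set.mem_setOf_eq, Set.mem_inter_iff, Set.mem_Iio]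
    constructor
    · rintro ⟨h1, h2⟩
      exact ⟨h1, by rw [lt_div_iff₀ hq0]; nlinarith⟩
    · rintro ⟨h1, h2⟩
      rw [lt_div_iff₀ hq0] at h2
      exact ⟨h1, by nlinarith⟩
  have hconv : Convex ℝ {x1 : ℝ | x1 ∈ Set.Icc (0:ℝ) m1 ∧ 0 < (m1+m2+t) - (1-p)*(x1+x2)} :=
    hSeq ▸ (convex_Icc _ _).inter (convex_Iio _)
  have hEpos : 0 < m1*(m1+m2+t) + (1-p)*m1*m2 + (1-p)*x2*(m2-m1) := by
    nlinarith [mul_nonneg hm1.le (sub_nonneg.2 hx2m),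
      mul_nonneg (sub_nonneg.2 hp1.le) (mul_nonneg hx20 hm2.le),
      mul_nonneg (mul_nonneg hp0 hx20) hm1.le,
      mul_pos hm1 hm1, mul_nonneg hm1.le ht, mul_nonneg hp0 (mul_nonneg hm1.le hm2.le)]
  have hE' : m1*(m1+m2+t) + (1-p)*m1*m2 + (1-p)*x2*(m2-m1) ≠ 0 := hEpos.ne'
  have hBle : ((1-p)*m1*m2 + p*(1-p)*m2*x2 - ((m1+m2+t) - (1-p)*x2)*(m2+t))
      / (m1*(m1+m2+t) + (1-p)*m1*m2 + (1-p)*x2*(m2-m1)) ≤ 0 := by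
    apply div_nonpos_of_nonpos_of_nonneg _ hEpos.le
    nlinarith [mul_nonneg (sub_nonneg.2 hx2m) ht, mul_nonneg (sub_nonneg.2 hx2m) hm1.le,
      mul_nonneg (sub_nonneg.2 hx2m) hm2.le, sq_nonneg (p*m2), mul_nonneg hp0 hx20,
      mul_nonneg (mul_nonneg hp0 hp0) (mul_nonneg hm2.le hx20),
      mul_nonneg (mul_nonneg hp0 hm2.le) (sub_nonneg.2 hx2m),
      mul_nonneg ht ht, mul_nonneg hm1.le ht, mul_nonneg hm2.le ht,
      mul_nonneg (mul_nonneg hp0 hm1.le) hm2.le]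
  have hCle : ((1-p)*m2*(m1*x2^2 - m2*(m1+x2)^2))
      / (m1*(m1*(m1+m2+t) + (1-p)*m1*m2 + (1-p)*x2*(m2-m1))) ≤ 0 := by
    apply div_nonpos_of_nonpos_of_nonneg _ (mul_pos hm1 hEpos).le
    apply mul_nonpos_of_nonneg_of_nonpos (mul_nonneg hq0.le hm2.le)
    nlinarith [mul_nonneg (mul_nonneg hm1.le hx20) (sub_nonneg.2 hx2m),
      mul_nonneg hm2.le (sq_nonneg m1), mul_nonneg hm2.le (sq_nonneg x2),
      mul_nonneg (mul_nonneg hm1.le hm2.le) hx20]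
  have hD1pos : ∀ x ∈ {x1 : ℝ | x1 ∈ Set.Icc (0:ℝ) m1 ∧ 0 < (m1+m2+t) - (1-p)*(x1+x2)},
      0 < ((m1+m2+t) - (1-p)*x2) + (-(1-p))*x := by
    rintro x ⟨-, h2⟩; nlinarith
  have hD2pos : ∀ x ∈ {x1 : ℝ | x1 ∈ Set.Icc (0:ℝ) m1 ∧ 0 < (m1+m2+t) - (1-p)*(x1+x2)},
      0 < (m1*m2 + m2*x2) + m1*x := by
    rintro x ⟨⟨hx0, -⟩, -⟩
    nlinarith [mul_nonneg hm2.le hx20, mul_nonneg hm1.le hx0, mul_pos hm1 hm2]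
  have h0 : ConcaveOn ℝ {x1 : ℝ | x1 ∈ Set.Icc (0:ℝ) m1 ∧ 0 < (m1+m2+t) - (1-p)*(x1+x2)}
      (fun _ => 1/m1) := concaveOn_const _ hconv
  have h1 := myConcave_scaled_inv hconv ((m1+m2+t) - (1-p)*x2) (-(1-p))
    (((1-p)*m1*m2 + p*(1-p)*m2*x2 - ((m1+m2+t) - (1-p)*x2)*(m2+t))
      / (m1*(m1+m2+t) + (1-p)*m1*m2 + (1-p)*x2*(m2-m1))) hBle hD1pos
  have h2 := myConcave_scaled_inv hconv (m1*m2 + m2*x2) m1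
    (((1-p)*m2*(m1*x2^2 - m2*(m1+x2)^2))
      / (m1*(m1*(m1+m2+t) + (1-p)*m1*m2 + (1-p)*x2*(m2-m1)))) hCle hD2pos
  have hsum := (h0.add h1).add h2
  refine myConcave_congr hsum fun x hx => ?_
  have hd1 := (hD1pos x hx).ne'
  have hd2 := (hD2pos x hx).ne'
  have hm1' : (m1:ℝ) ≠ 0 := hm1.ne'
  simp only [Pi.add_apply]
  rw [r1]
  rw [show ((m1+m2+t) - (1-p)*(x+x2)) * (m1*m2 + m1*x + m2*x2)
      = (((m1+m2+t) - (1-p)*x2) + (-(1-p))*x) * ((m1*m2 + m2*x2) + m1*x) from by ring]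
  exact frac_decomp _ _ _ _ _ _ _ hd1 hd2 hm1' hE' (by ring)

/-- Concavity of each pool's reward in its own strategy, on the region
where the game is well defined. -/
theorem stmt0 (m1 m2 t p : ℝ) (hm1 : 0 < m1) (hm2 : 0 < m2) (ht : 0 ≤ t)
    (hp0 : 0 ≤ p) (hp1 : p < 1) :
    (∀ x2 ∈ Set.Icc (0:ℝ) m2,
      ConcaveOn ℝ {x1 : ℝ | x1 ∈ Set.Icc (0:ℝ) m1 ∧ 0 < (m1+m2+t) - (1-p)*(x1+x2)}
        (fun x1 => r1 m1 m2 t p x1 x2)) ∧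
    (∀ x1 ∈ Set.Icc (0:ℝ) m1,
      ConcaveOn ℝ {x2 : ℝ | x2 ∈ Set.Icc (0:ℝ) m2 ∧ 0 < (m1+m2+t) - (1-p)*(x1+x2)}
        (fun x2 => r2 m1 m2 t p x1 x2)) := by
  constructor
  · intro x2 hx2
    exact key m1 m2 t p hm1 hm2 ht hp0 hp1 x2 hx2
  · intro x1 hx1
    have h := key m2 m1 t p hm2 hm1 ht hp0 hp1 x1 hx1
    have hset : {x : ℝ | x ∈ Set.Icc (0:ℝ) m2 ∧ 0 < (m2+m1+t) - (1-p)*(x+x1)}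
        = {x2 : ℝ | x2 ∈ Set.Icc (0:ℝ) m2 ∧ 0 < (m1+m2+t) - (1-p)*(x1+x2)} := by
      ext x
      simp only [Set.mem_setOf_eq]
      constructor
      · rintro ⟨ha, hb⟩
        refine ⟨ha, ?_⟩
        have : (m1+m2+t) - (1-p)*(x1+x) = (m2+m1+t) - (1-p)*(x+x1) := by ring
        linarith
      · rintro ⟨ha, hb⟩
        refine ⟨ha, ?_⟩
        have : (m1+m2+t) - (1-p)*(x1+x) = (m2+m1+t) - (1-p)*(x+x1) := by ring
        linarith
    have hfun : (fun x => r1 m2 m1 t p x x1) = fun x2 => r2 m1 m2 t p x1 x2 := by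
      funext x
      rw [r1, r2]
      rw [show (m2*m1 + m2*x + p*m1*x1 - (1-p)*x^2 - (1-p)*x*x1)
          = (m1*m2 + m2*x + p*m1*x1 - (1-p)*x^2 - (1-p)*x1*x) from by ring,
        show ((m2+m1+t) - (1-p)*(x+x1)) * (m2*m1 + m2*x + m1*x1)
          = ((m1+m2+t) - (1-p)*(x1+x)) * (m1*m2 + m1*x1 + m2*x) from by ring]
    rw [hset, hfun] at h
    exact h
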